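/- Let G be a connected graph with n vertices and minimum degree δ ≥ αn for a fixed α > 0, and let k < αn. Then s_{n−k}(G)/s_n(G) ≤ (1/(α^k k!)) · (1 − k/(αn))^{−k}. -/

import Mathlib

open SimpleGraph

/-- Number of subtrees of `G` with `m` vertices. -/
noncomputable def subtreeCount {V : Type*} [Fintype V] (G : SimpleGraph V) (m : ℕ) : ℕ :=
  {H : G.Subgraph | H.verts.ncard = m ∧ H.coe.IsTree}.ncard

namespace StmtAux2
open Finset
open scoped Classical
set_option linter.unusedSectionVars false
set_option linter.unusedVariables false

variable {V : Type*} [Fintype V] {G : SimpleGraph V}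

noncomputable instance : Fintype G.Subgraph :=
  Fintype.ofInjective (fun H : G.Subgraph => (H.verts, H.Adj))
    (fun _ _ h => SimpleGraph.Subgraph.ext (congrArg Prod.fst h) (congrArg Prod.snd h))

noncomputable def subT (G : SimpleGraph V) (m : ℕ) : Finset G.Subgraph :=
  Finset.univ.filter (fun H => H.verts.ncard = m ∧ H.coe.IsTree)

noncomputable def NT (G : SimpleGraph V) (H : G.Subgraph) : ℕ :=
  ((subT G (Fintype.card V)).filter (fun T => H ≤ T)).card

lemma edge_ncard (H : G.Subgraph) : H.edgeSet.ncard = H.coe.edgeSet.ncard := by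
  rw [← Subgraph.image_coe_edgeSet_coe,
    Set.ncard_image_of_injective _ (Sym2.map.injective Subtype.val_injective)]

lemma tree_card (H : G.Subgraph) (h : H.coe.IsTree) :
    H.edgeSet.ncard + 1 = H.verts.ncard := by
  classical
  have h1 := h.card_edgeFinset
  rw [edge_ncard, Set.ncard_eq_toFinset_card', Set.ncard_eq_toFinset_card']
  rw [Set.toFinset_card, Set.toFinset_card]
  rw [← h1]
  congr 1
  simp [edgeFinset]

lemma exists_coe_walk {H : G.Subgraph} {u v : V} (p : G.Walk u v)
    (hp : ∀ e ∈ p.edges, e ∈ H.edgeSet) (hu : u ∈ H.verts) (hv : v ∈ H.verts) :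
    ∃ q : H.coe.Walk ⟨u, hu⟩ ⟨v, hv⟩, q.map H.hom = p := by
  induction p with
  | nil => exact ⟨.nil, rfl⟩
  | @cons a b c h p ih =>
    have he : s(a, b) ∈ H.edgeSet := hp _ (by simp)
    have hadj : H.Adj a b := he
    have hb : b ∈ H.verts := H.edge_vert hadj.symm
    obtain ⟨q, hq⟩ := ih (fun e hee => hp e (by simp [hee])) hb hv
    exact ⟨.cons (by exact hadj) q, by subst hq; rfl⟩

lemma not_cycle_of_edges_subset {H : G.Subgraph} (hH : H.coe.IsAcyclic) {u : V}
    (p : G.Walk u u) (hc : p.IsCycle) (he : ∀ e ∈ p.edges, e ∈ H.edgeSet) : False := by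
  cases p with
  | nil => exact hc.ne_nil rfl
  | cons h q =>
    rename_i b
    have h1 : s(u, b) ∈ H.edgeSet := he _ (by simp)
    have hu : u ∈ H.verts := H.edge_vert h1
    obtain ⟨q', hq'⟩ := exists_coe_walk (H := H) (.cons h q) he hu hu
    rw [← hq'] at hc
    exact hH _ ((Walk.map_isCycle_iff_of_injective Subgraph.hom_injective).mp hc)

lemma edges_map_hom_subset {K : G.Subgraph} {x y : ↥K.verts} (c : K.coe.Walk x y) :
    ∀ e ∈ (c.map K.hom).edges, e ∈ K.edgeSet := by
  intro e hee
  rw [Walk.edges_map, List.mem_map] at hee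
  obtain ⟨e', he', rfl⟩ := hee
  have h1 : e' ∈ K.coe.edgeSet := c.edges_subset_edgeSet he'
  rw [← Subgraph.image_coe_edgeSet_coe]
  exact ⟨e', h1, by simp⟩

lemma coe_acyclic_of_le {K T : G.Subgraph} (h : K ≤ T) (hT : T.coe.IsAcyclic) :
    K.coe.IsAcyclic := by
  intro x c hc
  exact not_cycle_of_edges_subset hT (c.map K.hom) (hc.map Subgraph.hom_injective)
    (fun e hee => Subgraph.edgeSet_mono h (edges_map_hom_subset c e hee))

lemma sup_edge_isTree {H : G.Subgraph} (ht : H.coe.IsTree) {v w : V} (ha : G.Adj v w)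
    (hv : v ∉ H.verts) (hw : w ∈ H.verts) :
    (H ⊔ G.subgraphOfAdj ha).coe.IsTree ∧
      (H ⊔ G.subgraphOfAdj ha).verts = insert v H.verts := by
  set H' := H ⊔ G.subgraphOfAdj ha with hH'
  have hverts : H'.verts = insert v H.verts := by
    rw [hH']
    simp only [Subgraph.verts_sup, subgraphOfAdj_verts]
    ext x
    simp only [Set.mem_union, Set.mem_insert_iff, Set.mem_singleton_iff]
    constructor
    · rintro (h | h | h) <;> [exact Or.inr h; exact Or.inl h; exact Or.inr (h ▸ hw)]
    · rintro (h | h) <;> [exact Or.inr (Or.inl h); exact Or.inl h]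
  have hadj_v : ∀ y, H'.Adj v y → y = w := by
    intro y hy
    rcases hy with hy | hy
    · exact absurd (H.edge_vert hy) hv
    · simp only [subgraphOfAdj_adj, Sym2.eq, Sym2.rel_iff', Prod.mk.injEq, Prod.swap_prod_mk] at hy
      rcases hy with ⟨_, rfl⟩ | ⟨rfl, rfl⟩
      · rfl
      · exact absurd hw hv
  have hconn : H'.Connected :=
    Subgraph.connected_sup (Subgraph.Connected.preconnected ⟨ht.isConnected⟩)
      (Subgraph.subgraphOfAdj_connected ha).preconnected
      ⟨w, hw, by simp⟩
  refine ⟨⟨hconn.coe, ?_⟩, hverts⟩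
  classical
  intro x c hc
  have hcG : (c.map H'.hom).IsCycle := hc.map Subgraph.hom_injective
  have hpe : ∀ e ∈ (c.map H'.hom).edges, e ∈ H'.edgeSet := edges_map_hom_subset c
  have hE' : H'.edgeSet = H.edgeSet ∪ {s(v, w)} := by
    rw [hH', Subgraph.edgeSet_sup, edgeSet_subgraphOfAdj]
  by_cases hvw : s(v, w) ∈ (c.map H'.hom).edges
  · have hvs : v ∈ (c.map H'.hom).support :=
      (c.map H'.hom).fst_mem_support_of_mem_edges hvw
    obtain ⟨c2, hc2, hc2e⟩ : ∃ c2 : G.Walk v v, c2.IsCycle ∧ ∀ e ∈ c2.edges, e ∈ H'.edgeSet :=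
      ⟨(c.map H'.hom).rotate v hvs, hcG.rotate hvs,
        fun e hee => hpe e (((c.map H'.hom).rotate_edges v hvs).mem_iff.mp hee)⟩
    cases c2 with
    | nil => exact hc2.ne_nil rfl
    | cons h1 q =>
      rename_i b
      have hb : b = w := hadj_v b (hc2e s(v, b) (by simp))
      subst hb
      rw [Walk.cons_isCycle_iff] at hc2
      have hvw' : v ≠ b := fun hh => hv (hh ▸ hw)
      obtain ⟨y, h2, r, hr⟩ := Walk.exists_eq_cons_of_ne hvw' q.reverse
      have hyq : s(v, y) ∈ q.edges := by
        have h3 : s(v, y) ∈ q.reverse.edges := by rw [hr]; simp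
        rwa [Walk.edges_reverse, List.mem_reverse] at h3
      have hy : y = b := hadj_v y (hc2e s(v, y) (by simp [hyq]))
      exact hc2.2 (hy ▸ hyq)
  · exact not_cycle_of_edges_subset ht.IsAcyclic (c.map H'.hom) hcG
      (fun e hee => by
        have := hpe e hee
        rw [hE'] at this
        rcases this with h | h
        · exact h
        · exact absurd (h ▸ rfl : e = s(v,w)) (fun hh => hvw (hh ▸ hee)))

lemma subgraph_eq_of_verts_eq [Finite V] {T T1 T2 : G.Subgraph} (hT : T.coe.IsTree)
    (h1 : T1 ≤ T) (h2 : T2 ≤ T) (ht1 : T1.coe.IsTree) (ht2 : T2.coe.IsTree)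
    (hvv : T1.verts = T2.verts) : T1 = T2 := by
  set K := T1 ⊔ T2 with hK
  have hKle : K ≤ T := sup_le h1 h2
  have hKverts : K.verts = T1.verts := by
    rw [hK, Subgraph.verts_sup, ← hvv, Set.union_self]
  have hKconn : K.Connected :=
    Subgraph.connected_sup (Subgraph.Connected.preconnected ⟨ht1.isConnected⟩)
      (Subgraph.Connected.preconnected ⟨ht2.isConnected⟩)
      (by
        rw [Subgraph.verts_inf, ← hvv, Set.inter_self]
        exact Set.nonempty_coe_sort.mp ht1.isConnected.nonempty)
  have hKtree : K.coe.IsTree := ⟨hKconn.coe, coe_acyclic_of_le hKle hT.IsAcyclic⟩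
  have hcK := tree_card K hKtree
  have hc1 := tree_card T1 ht1
  have hc2 := tree_card T2 ht2
  rw [hKverts] at hcK
  have hKE : K.edgeSet = T1.edgeSet ∪ T2.edgeSet := Subgraph.edgeSet_sup
  have hsub1 : T1.edgeSet ⊆ K.edgeSet := Subgraph.edgeSet_mono le_sup_left
  have hsub2 : T2.edgeSet ⊆ K.edgeSet := Subgraph.edgeSet_mono le_sup_right
  have he1 : T1.edgeSet = K.edgeSet :=
    Set.eq_of_subset_of_ncard_le hsub1 (by omega) (Set.toFinite _)
  have he2 : T2.edgeSet = K.edgeSet :=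
    Set.eq_of_subset_of_ncard_le hsub2 (by rw [← hvv] at hc2; omega) (Set.toFinite _)
  have hE : T1.edgeSet = T2.edgeSet := he1.trans he2.symm
  ext a b
  · rw [hvv]
  · constructor <;> intro h
    · exact Subgraph.mem_edgeSet.mp (hE ▸ Subgraph.mem_edgeSet.mpr h)
    · exact Subgraph.mem_edgeSet.mp (hE ▸ Subgraph.mem_edgeSet.mpr h)

/-- ordered cross pairs (outside, inside) along G-edges -/
noncomputable def crossPairs (G : SimpleGraph V) (H : G.Subgraph) : Finset (V × V) :=
  Finset.univ.filter (fun p => p.1 ∉ H.verts ∧ p.2 ∈ H.verts ∧ G.Adj p.1 p.2)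

lemma cross_lower (H : G.Subgraph) {j : ℕ} (hj : H.vertsᶜ.ncard = j + 1)
    {α : ℝ} (hmin : ∀ v : V, α * (Fintype.card V : ℝ) ≤ ((G.neighborSet v).ncard : ℝ)) :
    ((j : ℝ) + 1) * (α * (Fintype.card V : ℝ) - j) ≤ ((crossPairs G H).card : ℝ) := by
  set Uf : Finset V := H.vertsᶜ.toFinset with hUf
  have hUcard : Uf.card = j + 1 := by
    rw [hUf, ← Set.ncard_eq_toFinset_card']; exact hj
  have hsplit : (crossPairs G H).card =
      ∑ v ∈ Uf, ((crossPairs G H).filter (fun p => p.1 = v)).card := by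
    apply Finset.card_eq_sum_card_fiberwise
    intro p hp
    simp only [Finset.mem_coe, crossPairs, mem_filter, mem_univ, true_and] at hp
    simp [hUf, hp.1]
  -- fiber lower bound in ℕ
  have hfiber : ∀ v ∈ Uf, (G.neighborFinset v).card ≤
      ((crossPairs G H).filter (fun p => p.1 = v)).card + j := by
    intro v hv
    have hvmem : v ∉ H.verts := by simpa [hUf] using hv
    have hsplit2 := Finset.card_filter_add_card_filter_not
      (s := G.neighborFinset v) (p := fun w => w ∈ H.verts)
    have hin : ((G.neighborFinset v).filter (fun w => w ∈ H.verts)).card =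
        ((crossPairs G H).filter (fun p => p.1 = v)).card := by
      apply Finset.card_bij' (fun w _ => (v, w)) (fun p _ => p.2)
      · intro w hw
        simp only [mem_filter, mem_neighborFinset] at hw
        simp [crossPairs, hvmem, hw.2, hw.1]
      · intro p hp
        simp only [crossPairs, mem_filter, mem_univ, true_and] at hp
        obtain ⟨⟨h1, h2, h3⟩, h4⟩ := hp
        subst h4
        simp [h2, h3]
      · intro w hw; rfl
      · intro p hp
        simp only [crossPairs, mem_filter] at hp
        exact Prod.ext hp.2.symm rfl
    have hout : ((G.neighborFinset v).filter (fun w => ¬ w ∈ H.verts)).card ≤ j := by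
      have hss : (G.neighborFinset v).filter (fun w => ¬ w ∈ H.verts) ⊆ Uf.erase v := by
        intro w hw
        simp only [mem_filter, mem_neighborFinset] at hw
        refine Finset.mem_erase.mpr ⟨fun hh => G.loopless.irrefl v (hh ▸ hw.1), ?_⟩
        simp [hUf, hw.2]
      calc _ ≤ (Uf.erase v).card := Finset.card_le_card hss
        _ = j := by rw [Finset.card_erase_of_mem (by exact hv), hUcard]; omega
    omega
  -- now real arithmetic
  have hA : ∀ v ∈ Uf, α * (Fintype.card V : ℝ) - j ≤
      (((crossPairs G H).filter (fun p => p.1 = v)).card : ℝ) := by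
    intro v hv
    have h1 := hmin v
    have h2 : (G.neighborSet v).ncard = (G.neighborFinset v).card := by
      rw [neighborFinset_def, Set.ncard_eq_toFinset_card']
    have h3 := hfiber v hv
    have h4 : ((G.neighborFinset v).card : ℝ) ≤
        (((crossPairs G H).filter (fun p => p.1 = v)).card : ℝ) + j := by
      exact_mod_cast h3
    rw [h2] at h1
    linarith
  calc ((j : ℝ) + 1) * (α * (Fintype.card V : ℝ) - j)
      = ∑ _v ∈ Uf, (α * (Fintype.card V : ℝ) - j) := by
        rw [Finset.sum_const, hUcard]; push_cast; ring
    _ ≤ ∑ v ∈ Uf, (((crossPairs G H).filter (fun p => p.1 = v)).card : ℝ) :=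
        Finset.sum_le_sum hA
    _ = ((crossPairs G H).card : ℝ) := by rw [hsplit]; push_cast; rfl

/-- add the cross edge `e` to `H` -/
noncomputable def addE (G : SimpleGraph V) (H : G.Subgraph) (e : V × V) : G.Subgraph :=
  if h : G.Adj e.1 e.2 then H ⊔ G.subgraphOfAdj h else H

lemma claim1 {α : ℝ} (hmin : ∀ v : V, α * (Fintype.card V : ℝ) ≤ ((G.neighborSet v).ncard : ℝ))
    {k : ℕ} (hkA : (k : ℝ) ≤ α * (Fintype.card V : ℝ)) :
    ∀ j, j ≤ k → ∀ H : G.Subgraph, H.coe.IsTree → H.vertsᶜ.ncard = j →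
      (α * (Fintype.card V : ℝ) - k) ^ j ≤ (NT G H : ℝ) := by
  set n := Fintype.card V
  set A := α * (n : ℝ) with hA
  intro j
  induction j with
  | zero =>
    intro _ H hH hcompl
    have h0 : H.vertsᶜ = ∅ := (Set.ncard_eq_zero (Set.toFinite _)).mp hcompl
    have huniv : H.verts = Set.univ := by
      rwa [Set.compl_empty_iff] at h0
    have hmem : H ∈ (subT G n).filter (fun T => H ≤ T) := by
      simp only [subT, mem_filter, mem_univ, true_and]
      exact ⟨⟨by rw [huniv, Set.ncard_univ, Nat.card_eq_fintype_card], hH⟩, le_refl H⟩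
    have : 1 ≤ NT G H := Finset.card_pos.mpr ⟨H, hmem⟩
    simpa using (by exact_mod_cast this : (1 : ℝ) ≤ (NT G H : ℝ))
  | succ j ih =>
    intro hjk H hH hcompl
    have hjk' : j ≤ k := Nat.le_of_succ_le hjk
    have hAk : (0:ℝ) ≤ A - k := by rw [hA]; linarith
    set c := A - (k:ℝ) with hc
    -- properties of cross pairs
    have hcrossmem : ∀ e ∈ crossPairs G H,
        e.1 ∉ H.verts ∧ e.2 ∈ H.verts ∧ G.Adj e.1 e.2 := by
      intro e he
      simpa [crossPairs] using he
    have haddE : ∀ e ∈ crossPairs G H,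
        (addE G H e).coe.IsTree ∧ (addE G H e).vertsᶜ.ncard = j ∧ H ≤ addE G H e := by
      intro e he
      obtain ⟨h1, h2, h3⟩ := hcrossmem e he
      rw [addE, dif_pos h3]
      obtain ⟨ht, hv⟩ := sup_edge_isTree hH h3 h1 h2
      refine ⟨ht, ?_, le_sup_left⟩
      have hcompl2 : (insert e.1 H.verts)ᶜ = H.vertsᶜ \ {e.1} := by
        ext x; simp [not_or, and_comm]
      rw [hv, hcompl2, Set.ncard_diff_singleton_of_mem (show e.1 ∈ H.vertsᶜ from h1), hcompl]; omega
    -- facts about H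
    have hHverts : H.verts.ncard + (j + 1) = n := by
      have := Set.ncard_add_ncard_compl H.verts
      rw [hcompl, Nat.card_eq_fintype_card] at this
      exact this
    have hHne : 1 ≤ H.verts.ncard := by
      have h0 : H.verts.Nonempty := Set.nonempty_coe_sort.mp hH.isConnected.nonempty
      have := (Set.ncard_pos (Set.toFinite _)).mpr h0
      omega
    have hHedge : H.edgeSet.ncard + 1 = H.verts.ncard := tree_card H hH
    -- Key2: the double-count upper bound
    have key2 : ∑ e ∈ crossPairs G H, NT G (addE G H e) ≤ (j + 1) * NT G H := by
      calc ∑ e ∈ crossPairs G H, NT G (addE G H e)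
          = ∑ e ∈ crossPairs G H, ∑ T ∈ subT G n, if addE G H e ≤ T then 1 else 0 := by
            refine Finset.sum_congr rfl fun e _ => ?_
            rw [NT, Finset.card_filter]
        _ = ∑ T ∈ subT G n, ∑ e ∈ crossPairs G H, if addE G H e ≤ T then 1 else 0 :=
            Finset.sum_comm
        _ ≤ ∑ T ∈ subT G n, if H ≤ T then j + 1 else 0 := by
            apply Finset.sum_le_sum
            intro T hT
            rw [← Finset.card_filter]
            by_cases hHT : H ≤ T
            · rw [if_pos hHT]
              simp only [subT, mem_filter, mem_univ, true_and] at hT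
              obtain ⟨hTverts, hTtree⟩ := hT
              have hTedge : T.edgeSet.ncard + 1 = n := by
                have := tree_card T hTtree
                rw [hTverts] at this
                exact this
              have hsub : H.edgeSet ⊆ T.edgeSet := Subgraph.edgeSet_mono hHT
              have hdiff : (T.edgeSet \ H.edgeSet).ncard = j + 1 := by
                rw [Set.ncard_diff hsub (Set.toFinite _)]
                omega
              rw [← hdiff, Set.ncard_eq_toFinset_card' (T.edgeSet \ H.edgeSet)]
              apply Finset.card_le_card_of_injOn (fun e => s(e.1, e.2))
              · intro e he
                rw [Finset.mem_coe, Finset.mem_filter] at he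
                obtain ⟨hec, hle⟩ := he
                obtain ⟨h1, h2, h3⟩ := hcrossmem e hec
                have hadjT : T.Adj e.1 e.2 := by
                  apply hle.2
                  rw [addE, dif_pos h3]
                  exact Or.inr (by simp)
                rw [Finset.mem_coe, Set.mem_toFinset]
                exact ⟨hadjT, fun hH2 => h1 (H.edge_vert hH2)⟩
              · intro e he e' he' heq
                rw [Finset.coe_filter, Set.mem_setOf_eq] at he he'
                obtain ⟨h1, h2, h3⟩ := hcrossmem e he.1
                obtain ⟨h1', h2', h3'⟩ := hcrossmem e' he'.1
                simp only [Sym2.eq, Sym2.rel_iff', Prod.mk.injEq, Prod.swap_prod_mk] at heq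
                rcases heq with ⟨ha, hb⟩ | ⟨ha, hb⟩
                · exact Prod.ext ha hb
                · exact absurd (ha ▸ h2') h1
            · rw [if_neg hHT]
              have : (crossPairs G H).filter (fun e => addE G H e ≤ T) = ∅ := by
                rw [Finset.filter_eq_empty_iff]
                intro e he hle
                exact hHT (le_trans (haddE e he).2.2 hle)
              rw [this]
              simp
        _ = (j + 1) * NT G H := by
            rw [NT, Finset.card_filter, Finset.mul_sum]
            refine Finset.sum_congr rfl fun T _ => ?_
            by_cases hHT : H ≤ T <;> simp [hHT]
    -- Key1: each extension satisfies the induction hypothesis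
    have key1 : ∀ e ∈ crossPairs G H, c ^ j ≤ (NT G (addE G H e) : ℝ) := fun e he =>
      ih hjk' _ (haddE e he).1 (haddE e he).2.1
    have hcross := cross_lower H hcompl hmin
    have hstep1 : ((j : ℝ) + 1) * c ≤ ((crossPairs G H).card : ℝ) := by
      refine le_trans ?_ hcross
      have hjkR : (j : ℝ) ≤ (k : ℝ) := by exact_mod_cast hjk'
      have : c ≤ A - (j : ℝ) := by rw [hc]; linarith
      nlinarith
    have hchain : ((j : ℝ) + 1) * c ^ (j + 1) ≤ ((j : ℝ) + 1) * (NT G H : ℝ) := by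
      calc ((j : ℝ) + 1) * c ^ (j + 1) = (((j : ℝ) + 1) * c) * c ^ j := by ring
        _ ≤ ((crossPairs G H).card : ℝ) * c ^ j :=
            mul_le_mul_of_nonneg_right hstep1 (pow_nonneg hAk j)
        _ = ∑ _e ∈ crossPairs G H, c ^ j := by rw [Finset.sum_const, nsmul_eq_mul]
        _ ≤ ∑ e ∈ crossPairs G H, (NT G (addE G H e) : ℝ) := Finset.sum_le_sum key1
        _ = ((∑ e ∈ crossPairs G H, NT G (addE G H e) : ℕ) : ℝ) := by push_cast; rfl
        _ ≤ (((j + 1) * NT G H : ℕ) : ℝ) := by exact_mod_cast key2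
        _ = ((j : ℝ) + 1) * (NT G H : ℝ) := by push_cast; ring
    have hpos : (0 : ℝ) < (j : ℝ) + 1 := by positivity
    exact le_of_mul_le_mul_left hchain hpos

lemma subtreeCount_eq (m : ℕ) :
    {H : G.Subgraph | H.verts.ncard = m ∧ H.coe.IsTree}.ncard = (subT G m).card := by
  rw [Set.ncard_eq_toFinset_card', Set.toFinset_setOf, subT]

lemma M_le {k : ℕ} (hkn : k ≤ Fintype.card V) {T : G.Subgraph} (hT : T ∈ subT G (Fintype.card V)) :
    ((subT G (Fintype.card V - k)).filter (fun T' => T' ≤ T)).card ≤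
      (Fintype.card V).choose k := by
  simp only [subT, mem_filter, mem_univ, true_and] at hT
  have := Finset.card_powersetCard (Fintype.card V - k) (Finset.univ : Finset V)
  rw [Finset.card_univ] at this
  rw [← Nat.choose_symm hkn, ← this]
  apply Finset.card_le_card_of_injOn (fun T' => T'.verts.toFinset)
  · intro T' hT'
    simp only [Finset.mem_coe, subT, mem_filter, mem_univ, true_and] at hT'
    rw [Finset.mem_coe, Finset.mem_powersetCard]
    exact ⟨Finset.subset_univ _, by rw [← Set.ncard_eq_toFinset_card']; exact hT'.1.1⟩
  · intro T1 h1 T2 h2 heq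
    rw [Finset.coe_filter, Set.mem_setOf_eq] at h1 h2
    simp only [subT, mem_filter, mem_univ, true_and] at h1 h2
    exact subgraph_eq_of_verts_eq hT.2 h1.2 h2.2 h1.1.2 h2.1.2
      (by rwa [← Set.toFinset_inj])

lemma double_count (k : ℕ) :
    ∑ T' ∈ subT G (Fintype.card V - k), NT G T' =
      ∑ T ∈ subT G (Fintype.card V),
        ((subT G (Fintype.card V - k)).filter (fun T' => T' ≤ T)).card := by
  simp only [NT, Finset.card_filter]
  exact Finset.sum_comm

theorem stmt10' (G : SimpleGraph V) (hconn : G.Connected)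
    (α : ℝ) (hα : 0 < α)
    (hmin : ∀ v : V, α * (Fintype.card V : ℝ) ≤ ((G.neighborSet v).ncard : ℝ))
    (k : ℕ) (hk : 0 < k) (hkn : (k : ℝ) < α * (Fintype.card V : ℝ)) :
    ({H : G.Subgraph | H.verts.ncard = Fintype.card V - k ∧ H.coe.IsTree}.ncard : ℝ) /
        ({H : G.Subgraph | H.verts.ncard = Fintype.card V ∧ H.coe.IsTree}.ncard : ℝ) ≤
      1 / (α ^ k * (Nat.factorial k : ℝ)) *
        (1 - (k : ℝ) / (α * (Fintype.card V : ℝ))) ^ (-(k : ℤ)) := by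
  classical
  set n := Fintype.card V with hn
  set A := α * (n : ℝ) with hA
  have hApos : (0 : ℝ) < A := lt_trans (by exact_mod_cast hk) hkn
  have hnpos : 0 < n := by
    by_contra h
    push_neg at h
    interval_cases n
    · rw [hA] at hApos; simp at hApos
  have hkltn : k < n := by
    obtain ⟨v⟩ : Nonempty V := Fintype.card_pos_iff.mp hnpos
    have h1 := hmin v
    have h2 : (G.neighborSet v).ncard ≤ n - 1 := by
      have hsub : G.neighborSet v ⊆ {v}ᶜ := by
        intro w hw
        simp only [Set.mem_compl_iff, Set.mem_singleton_iff]
        rintro rfl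
        exact G.loopless.irrefl _ hw
      calc (G.neighborSet v).ncard ≤ ({v}ᶜ : Set V).ncard :=
            Set.ncard_le_ncard hsub (Set.toFinite _)
        _ = n - 1 := by
            have := Set.ncard_add_ncard_compl ({v} : Set V)
            rw [Set.ncard_singleton, Nat.card_eq_fintype_card] at this
            omega
    have h3 : (k : ℝ) < (n : ℝ) - 1 + 1 := by
      calc (k : ℝ) < A := hkn
        _ ≤ ((n - 1 : ℕ) : ℝ) := le_trans h1 (by exact_mod_cast h2)
        _ ≤ (n : ℝ) - 1 := by
            have : ((n - 1 : ℕ) : ℝ) = (n : ℝ) - 1 := by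
              have : 1 ≤ n := hnpos
              push_cast [Nat.cast_sub this]
              ring
            rw [this]
        _ < (n : ℝ) - 1 + 1 := by linarith
    have : (k : ℝ) < (n : ℝ) := by linarith
    exact_mod_cast this
  set c := A - (k : ℝ) with hc
  have hcpos : (0 : ℝ) < c := by rw [hc]; linarith
  set s' := (subT G (n - k)).card with hs'
  set sn := (subT G n).card with hsn
  -- main counting inequality
  have main : (s' : ℝ) * c ^ k ≤ (sn : ℝ) * (n.choose k : ℝ) := by
    have h1 : ∀ T' ∈ subT G (n - k), c ^ k ≤ (NT G T' : ℝ) := by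
      intro T' hT'
      simp only [subT, mem_filter, mem_univ, true_and] at hT'
      refine claim1 hmin (le_of_lt hkn) k le_rfl T' hT'.2 ?_
      have := Set.ncard_add_ncard_compl T'.verts
      rw [hT'.1, Nat.card_eq_fintype_card, ← hn] at this
      omega
    have h2 : (s' : ℝ) * c ^ k ≤ ∑ T' ∈ subT G (n - k), (NT G T' : ℝ) := by
      rw [hs']
      calc ((subT G (n - k)).card : ℝ) * c ^ k = ∑ _T' ∈ subT G (n - k), c ^ k := by
            rw [Finset.sum_const, nsmul_eq_mul]
        _ ≤ _ := Finset.sum_le_sum h1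
    have h3 : ∑ T' ∈ subT G (n - k), (NT G T' : ℝ) ≤ (sn : ℝ) * (n.choose k : ℝ) := by
      have h4 : ∑ T' ∈ subT G (n - k), NT G T' ≤ sn * n.choose k := by
        rw [double_count]
        calc ∑ T ∈ subT G n, ((subT G (n - k)).filter (fun T' => T' ≤ T)).card
            ≤ ∑ _T ∈ subT G n, n.choose k :=
              Finset.sum_le_sum (fun T hT => M_le (le_of_lt hkltn) hT)
          _ = sn * n.choose k := by rw [Finset.sum_const, smul_eq_mul, hsn]
      calc ∑ T' ∈ subT G (n - k), (NT G T' : ℝ)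
          = ((∑ T' ∈ subT G (n - k), NT G T' : ℕ) : ℝ) := by push_cast; rfl
        _ ≤ _ := by exact_mod_cast h4
    linarith
  -- identify the RHS
  have hRHS : 1 / (α ^ k * (Nat.factorial k : ℝ)) * (1 - (k : ℝ) / A) ^ (-(k : ℤ)) =
      (n : ℝ) ^ k / ((Nat.factorial k : ℝ) * c ^ k) := by
    have hbase : 1 - (k : ℝ) / A = c / A := by
      rw [hc]; field_simp
    rw [hbase]
    rw [zpow_neg, zpow_natCast]
    rw [div_pow, inv_div]
    rw [hA, mul_pow]
    have hα' : α ^ k ≠ 0 := by positivity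
    have hfact : (Nat.factorial k : ℝ) ≠ 0 := by positivity
    have hck : c ^ k ≠ 0 := by positivity
    field_simp
  rw [subtreeCount_eq, subtreeCount_eq, ← hs', ← hsn, hRHS]
  -- now finish: s'/sn ≤ n^k/(k! c^k)
  have hchoose : (Nat.factorial k : ℝ) * (n.choose k : ℝ) ≤ (n : ℝ) ^ k := by
    have := Nat.descFactorial_le_pow n k
    rw [Nat.descFactorial_eq_factorial_mul_choose] at this
    exact_mod_cast this
  rcases Nat.eq_zero_or_pos sn with h0 | hpos
  · have hz : (s' : ℝ) = 0 := by
      have : (s' : ℝ) * c ^ k ≤ 0 := by rw [h0] at main; simpa using main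
      have hck : (0:ℝ) < c ^ k := by positivity
      nlinarith [Nat.cast_nonneg (α := ℝ) s']
    rw [hz]
    simp only [zero_div]
    positivity
  · rw [div_le_div_iff₀ (by exact_mod_cast hpos) (by positivity)]
    have hfactpos : (0:ℝ) < (Nat.factorial k : ℝ) := by positivity
    calc (s' : ℝ) * ((Nat.factorial k : ℝ) * c ^ k)
        = ((s' : ℝ) * c ^ k) * (Nat.factorial k : ℝ) := by ring
      _ ≤ ((sn : ℝ) * (n.choose k : ℝ)) * (Nat.factorial k : ℝ) :=
          mul_le_mul_of_nonneg_right main (le_of_lt hfactpos)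
      _ = (sn : ℝ) * ((Nat.factorial k : ℝ) * (n.choose k : ℝ)) := by ring
      _ ≤ (sn : ℝ) * (n : ℝ) ^ k :=
          mul_le_mul_of_nonneg_left hchoose (Nat.cast_nonneg _)
      _ = (n : ℝ) ^ k * (sn : ℝ) := by ring

end StmtAux2

theorem stmt10 {V : Type*} [Fintype V] (G : SimpleGraph V) (hconn : G.Connected)
    (α : ℝ) (hα : 0 < α)
    (hmin : ∀ v : V, α * (Fintype.card V : ℝ) ≤ ((G.neighborSet v).ncard : ℝ))
    (k : ℕ) (hk : 0 < k) (hkn : (k : ℝ) < α * (Fintype.card V : ℝ)) :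
    (subtreeCount G (Fintype.card V - k) : ℝ) / (subtreeCount G (Fintype.card V) : ℝ) ≤
      1 / (α ^ k * (Nat.factorial k : ℝ)) *
        (1 - (k : ℝ) / (α * (Fintype.card V : ℝ))) ^ (-(k : ℤ)) := by
  have h := StmtAux2.stmt10' G hconn α hα hmin k hk hkn
  simpa [subtreeCount] using h
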